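/- Unrolled upper bound on the distance between the two generated images sharing a latent code. Let d, T ∈ ℕ with T ≥ 1. Let μ, μ̂ : (EuclideanSpace ℝ (Fin d)) → ℕ → EuclideanSpace ℝ (Fin d), σ : ℕ → EuclideanSpace ℝ (Fin d), ε : ℕ → EuclideanSpace ℝ (Fin d), and define two chains with a common terminal point x_T = x̂_T and shared noises: x_{t−1} = μ (x_t) t + (σ t) ⊙ (ε t) and x̂_{t−1} = μ̂ (x̂_t) t + (σ t) ⊙ (ε t) for t = T, …, 1. Assume for each t with 1 ≤ t ≤ T: (i) y ↦ μ y t is K_t-Lipschitz with K_t ≥ 0; (ii) ‖μ y t − μ̂ y t‖ ≤ S_t for all y, with S_t ≥ 0. Then the generated images satisfy ‖x₀ − x̂₀‖ ≤ Σ_{t=1}^{T} ( Π_{s=1}^{t−1} (K_s + 1) ) · S_t. -/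
import Mathlib


/-- **Unrolled upper bound on the distance between the two generated images sharing a
latent code.** Two chains with common terminal point `x T = x̂ T` and shared noises
`x (t−1) = μ (x t) t + (σ t) ⊙ (ε t)`, `x̂ (t−1) = μ̂ (x̂ t) t + (σ t) ⊙ (ε t)`,
where `y ↦ μ y t` is `K t`-Lipschitz and `‖μ y t − μ̂ y t‖ ≤ S t`, satisfy
`‖x 0 − x̂ 0‖ ≤ ∑_{t=1}^{T} (∏_{s=1}^{t−1} (K s + 1)) * S t`. -/
theorem unrolled_image_distance_bound
    (d T : ℕ) (hT : 1 ≤ T)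
    (μ μhat : EuclideanSpace ℝ (Fin d) → ℕ → EuclideanSpace ℝ (Fin d))
    (σ ε : ℕ → EuclideanSpace ℝ (Fin d))
    (K S : ℕ → ℝ)
    (hK : ∀ t, 1 ≤ t → t ≤ T → 0 ≤ K t)
    (hS : ∀ t, 1 ≤ t → t ≤ T → 0 ≤ S t)
    (hLip : ∀ t, 1 ≤ t → t ≤ T →
      ∀ y y', ‖μ y t - μ y' t‖ ≤ K t * ‖y - y'‖)
    (hText : ∀ t, 1 ≤ t → t ≤ T → ∀ y, ‖μ y t - μhat y t‖ ≤ S t)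
    (x xhat : ℕ → EuclideanSpace ℝ (Fin d))
    (hTerm : x T = xhat T)
    (hx : ∀ t, 1 ≤ t → t ≤ T →
      ∀ i, x (t - 1) i = μ (x t) t i + σ t i * ε t i)
    (hxhat : ∀ t, 1 ≤ t → t ≤ T →
      ∀ i, xhat (t - 1) i = μhat (xhat t) t i + σ t i * ε t i) :
    ‖x 0 - xhat 0‖ ≤
      ∑ t ∈ Finset.Icc 1 T, (∏ s ∈ Finset.Icc 1 (t - 1), (K s + 1)) * S t := by
  -- nonnegativity of terms
  have hterm_nonneg : ∀ m t, t ∈ Finset.Icc (m + 1) T →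
      0 ≤ (∏ s ∈ Finset.Icc (m + 1) (t - 1), (K s + 1)) * S t := by
    intro m t ht
    simp only [Finset.mem_Icc] at ht
    apply mul_nonneg
    · apply Finset.prod_nonneg
      intro s hs
      simp only [Finset.mem_Icc] at hs
      have h1 : 1 ≤ s := le_trans (Nat.le_add_left 1 m) hs.1
      have h2 : s ≤ T := le_trans hs.2 (le_trans (Nat.sub_le t 1) ht.2)
      have := hK s h1 h2
      linarith
    · exact hS t (le_trans (Nat.le_add_left 1 m) ht.1) ht.2
  have key : ∀ n m, m + n = T →
      ‖x m - xhat m‖ ≤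
        ∑ t ∈ Finset.Icc (m + 1) T, (∏ s ∈ Finset.Icc (m + 1) (t - 1), (K s + 1)) * S t := by
    intro n
    induction n with
    | zero =>
      intro m hm
      simp only [Nat.add_zero] at hm
      subst hm
      rw [hTerm, sub_self, norm_zero]
      exact Finset.sum_nonneg (hterm_nonneg m)
    | succ n ih =>
      intro m hm
      have hm1 : m + 1 ≤ T := by omega
      have h1m : 1 ≤ m + 1 := by omega
      have IH := ih (m + 1) (by omega)
      -- recursion step
      have hxm : x m - xhat m = μ (x (m + 1)) (m + 1) - μhat (xhat (m + 1)) (m + 1) := by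
        ext i
        have h1 := hx (m + 1) h1m hm1 i
        have h2 := hxhat (m + 1) h1m hm1 i
        simp only [Nat.add_sub_cancel] at h1 h2
        simp only [PiLp.sub_apply, h1, h2]
        ring
      have htri : ‖x m - xhat m‖ ≤ K (m + 1) * ‖x (m + 1) - xhat (m + 1)‖ + S (m + 1) := by
        rw [hxm]
        calc ‖μ (x (m + 1)) (m + 1) - μhat (xhat (m + 1)) (m + 1)‖
            ≤ ‖μ (x (m + 1)) (m + 1) - μ (xhat (m + 1)) (m + 1)‖ +
              ‖μ (xhat (m + 1)) (m + 1) - μhat (xhat (m + 1)) (m + 1)‖ := by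
              have := norm_sub_le_norm_sub_add_norm_sub (μ (x (m + 1)) (m + 1))
                (μ (xhat (m + 1)) (m + 1)) (μhat (xhat (m + 1)) (m + 1))
              exact this
          _ ≤ K (m + 1) * ‖x (m + 1) - xhat (m + 1)‖ + S (m + 1) :=
              add_le_add (hLip (m + 1) h1m hm1 _ _) (hText (m + 1) h1m hm1 _)
      -- split the sum
      have hsplit : Finset.Icc (m + 1) T = insert (m + 1) (Finset.Icc (m + 2) T) := by
        ext a
        simp only [Finset.mem_Icc, Finset.mem_insert]
        omega
      have hnotmem : m + 1 ∉ Finset.Icc (m + 2) T := by simp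
      have hB : 0 ≤ ∑ t ∈ Finset.Icc (m + 2) T,
          (∏ s ∈ Finset.Icc (m + 2) (t - 1), (K s + 1)) * S t :=
        Finset.sum_nonneg (hterm_nonneg (m + 1))
      have hKm : 0 ≤ K (m + 1) := hK (m + 1) h1m hm1
      rw [hsplit, Finset.sum_insert hnotmem]
      have hprodsplit : ∀ t ∈ Finset.Icc (m + 2) T,
          (∏ s ∈ Finset.Icc (m + 1) (t - 1), (K s + 1)) * S t =
            (K (m + 1) + 1) * ((∏ s ∈ Finset.Icc (m + 2) (t - 1), (K s + 1)) * S t) := by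
        intro t ht
        simp only [Finset.mem_Icc] at ht
        have h1 : m + 1 ≤ t - 1 := by omega
        have : Finset.Icc (m + 1) (t - 1) = insert (m + 1) (Finset.Icc (m + 2) (t - 1)) := by
          ext a
          simp only [Finset.mem_Icc, Finset.mem_insert]
          omega
        rw [this, Finset.prod_insert (by simp)]
        ring
      rw [Finset.sum_congr rfl hprodsplit, ← Finset.mul_sum]
      have hempty : Finset.Icc (m + 1) m = (∅ : Finset ℕ) := by
        apply Finset.Icc_eq_empty
        omega
      have hprod1 : (∏ s ∈ Finset.Icc (m + 1) (m + 1 - 1), (K s + 1)) = 1 := by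
        simp [Nat.add_sub_cancel, hempty]
      rw [hprod1, one_mul]
      calc ‖x m - xhat m‖ ≤ K (m + 1) * ‖x (m + 1) - xhat (m + 1)‖ + S (m + 1) := htri
        _ ≤ K (m + 1) * (∑ t ∈ Finset.Icc (m + 2) T,
              (∏ s ∈ Finset.Icc (m + 2) (t - 1), (K s + 1)) * S t) + S (m + 1) := by
            have := mul_le_mul_of_nonneg_left IH hKm
            linarith
        _ ≤ S (m + 1) + (K (m + 1) + 1) * (∑ t ∈ Finset.Icc (m + 2) T,
              (∏ s ∈ Finset.Icc (m + 2) (t - 1), (K s + 1)) * S t) := by nlinarith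
  have := key T 0 (by omega)
  simpa using this
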